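/- arXiv:0710.2147 — 3 statements merged into one kernel-verified Lean document; each statement's English description precedes it below -/
import Mathlib

section
/- Let A be a finite-dimensional G-graded algebra over a field K (G a finite group) such that every homogeneous element of A is either invertible or nilpotent. Then the set of homogeneous nilpotent elements generates a graded ideal J all of whose homogeneous elements are nilpotent, and A/J is a graded algebra in which every nonzero homogeneous element is invertible. -/
section Aux

variable {K G A : Type} [Field K] [AddGroup G] [DecidableEq G]
    [Ring A] [Algebra K A] (𝒜 : G → Submodule K A) [GradedAlgebra 𝒜]

private lemma aux_left_inv_pow {a b : A} (h : b * a = 1) : ∀ m : ℕ, b ^ m * a ^ m = 1 := by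
  intro m
  induction m with
  | zero => simp
  | succ n ih =>
    rw [pow_succ b, pow_succ' a, mul_assoc, ← mul_assoc b a, h, one_mul, ih]

private lemma aux_left_inv_nilpotent {a b : A} (h : b * a = 1) (hn : IsNilpotent a) :
    (1 : A) = 0 := by
  obtain ⟨n, hn⟩ := hn
  have h2 := aux_left_inv_pow h n
  rw [hn, mul_zero] at h2
  exact h2.symm

private lemma aux_unit_nilp {a : A} (h : IsUnit a) (hn : IsNilpotent a) : (1 : A) = 0 := by
  obtain ⟨n, hn⟩ := hn
  have := h.pow n
  rw [hn, isUnit_zero_iff] at this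
  exact this.symm

private lemma aux_triv_nilp (htriv : (1 : A) = 0) (x : A) : IsNilpotent x := by
  refine ⟨1, ?_⟩
  rw [pow_one, ← mul_one x, htriv, mul_zero]

private lemma aux_hom_inv {g : G} {u : A} (hu : u ∈ 𝒜 g) (h : IsUnit u) :
    ∃ w ∈ 𝒜 (-g), w * u = 1 ∧ u * w = 1 := by
  classical
  obtain ⟨v, hv1, hv2⟩ : ∃ v : A, v * u = 1 ∧ u * v = 1 :=
    ⟨↑h.unit⁻¹, by simp, by simp⟩
  set w : A := (DirectSum.decompose 𝒜 v (-g) : A) with hwdef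
  have hwu : w * u = 1 := by
    have h1 : GradedRing.proj 𝒜 (0 : G) (v * u) = 1 := by
      rw [hv1, GradedRing.proj_apply,
        DirectSum.decompose_of_mem_same 𝒜 (SetLike.one_mem_graded 𝒜)]
    have hv' : v = ∑ i ∈ DFinsupp.support (DirectSum.decompose 𝒜 v),
        (DirectSum.decompose 𝒜 v i : A) := (DirectSum.sum_support_decompose 𝒜 v).symm
    rw [show v * u = ∑ i ∈ DFinsupp.support (DirectSum.decompose 𝒜 v),
          (DirectSum.decompose 𝒜 v i : A) * u by rw [← Finset.sum_mul, ← hv'],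
        map_sum] at h1
    rw [Finset.sum_eq_single (-g)] at h1
    · rw [GradedRing.proj_apply] at h1
      have hmem : w * u ∈ 𝒜 0 := by
        have := SetLike.mul_mem_graded (SetLike.coe_mem (DirectSum.decompose 𝒜 v (-g))) hu
        rwa [neg_add_cancel] at this
      rwa [DirectSum.decompose_of_mem_same 𝒜 hmem] at h1
    · intro i _ hine
      rw [GradedRing.proj_apply]
      have hmem : (DirectSum.decompose 𝒜 v i : A) * u ∈ 𝒜 (i + g) :=
        SetLike.mul_mem_graded (SetLike.coe_mem _) hu
      exact DirectSum.decompose_of_mem_ne 𝒜 hmem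
        (fun h0 => hine (eq_neg_of_add_eq_zero_left h0))
    · intro hns
      rw [DFinsupp.notMem_support_iff] at hns
      rw [hns]
      simp
  have hwv : w = v := by
    calc w = w * (u * v) := by rw [hv2, mul_one]
    _ = (w * u) * v := by rw [mul_assoc]
    _ = v := by rw [hwu, one_mul]
  exact ⟨w, SetLike.coe_mem _, hwu, by rw [hwv, hv2]⟩


private lemma aux_add_nilp (hloc : ∀ g : G, ∀ a ∈ 𝒜 g, IsUnit a ∨ IsNilpotent a)
    {g : G} {a b : A} (ha : a ∈ 𝒜 g) (hb : b ∈ 𝒜 g)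
    (hna : IsNilpotent a) (hnb : IsNilpotent b) : IsNilpotent (a + b) := by
  rcases hloc g (a + b) (add_mem ha hb) with hu | hn
  · by_cases htriv : (1 : A) = 0
    · exact aux_triv_nilp htriv _
    exfalso
    obtain ⟨w, hwmem, hwu, huw⟩ := aux_hom_inv 𝒜 (add_mem ha hb) hu
    have hwa : w * a ∈ 𝒜 0 := by
      have := SetLike.mul_mem_graded hwmem ha; rwa [neg_add_cancel] at this
    have hwb : w * b ∈ 𝒜 0 := by
      have := SetLike.mul_mem_graded hwmem hb; rwa [neg_add_cancel] at this
    have hwa_nil : IsNilpotent (w * a) := by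
      rcases hloc 0 _ hwa with hx | hx
      · exfalso
        have h2 : IsUnit ((a + b) * (w * a)) := hu.mul hx
        rw [← mul_assoc, huw, one_mul] at h2
        exact htriv (aux_unit_nilp h2 hna)
      · exact hx
    have hwb_nil : IsNilpotent (w * b) := by
      rcases hloc 0 _ hwb with hx | hx
      · exfalso
        have h2 : IsUnit ((a + b) * (w * b)) := hu.mul hx
        rw [← mul_assoc, huw, one_mul] at h2
        exact htriv (aux_unit_nilp h2 hnb)
      · exact hx
    have h1 : w * a = 1 - w * b := by
      rw [eq_sub_iff_add_eq, ← mul_add, hwu]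
    have h2 : IsUnit (w * a) := h1 ▸ hwb_nil.isUnit_one_sub
    exact htriv (aux_unit_nilp h2 hwa_nil)
  · exact hn

private lemma aux_mul_nilp (hloc : ∀ g : G, ∀ a ∈ 𝒜 g, IsUnit a ∨ IsNilpotent a)
    {h g : G} {x n : A} (hx : x ∈ 𝒜 h) (hng : n ∈ 𝒜 g) (hnn : IsNilpotent n) :
    IsNilpotent (x * n) := by
  rcases hloc (h + g) _ (SetLike.mul_mem_graded hx hng) with hu | h'
  · obtain ⟨w, hw⟩ := hu.exists_left_inv
    have h1 : (w * x) * n = 1 := by rw [mul_assoc]; exact hw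
    exact aux_triv_nilp (aux_left_inv_nilpotent h1 hnn) _
  · exact h'

variable (hloc : ∀ g : G, ∀ a ∈ 𝒜 g, IsUnit a ∨ IsNilpotent a)

private def Nsub (g : G) : Submodule K A where
  carrier := {a | a ∈ 𝒜 g ∧ IsNilpotent a}
  zero_mem' := ⟨zero_mem _, ⟨1, by simp⟩⟩
  add_mem' := fun hx hy => ⟨add_mem hx.1 hy.1, aux_add_nilp 𝒜 hloc hx.1 hy.1 hx.2 hy.2⟩
  smul_mem' := fun c a hx => by
    obtain ⟨hag, n, hn⟩ := hx
    exact ⟨Submodule.smul_mem _ _ hag, ⟨n, by rw [smul_pow, hn, smul_zero]⟩⟩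

private lemma mem_Nsub_def {g : G} {a : A} :
    a ∈ Nsub 𝒜 hloc g ↔ a ∈ 𝒜 g ∧ IsNilpotent a := Iff.rfl

private lemma N_mul_mem {a : A} (haN : a ∈ ⨆ g, Nsub 𝒜 hloc g) (x : A) :
    x * a ∈ ⨆ g, Nsub 𝒜 hloc g := by
  classical
  refine Submodule.iSup_induction (motive := fun a => ∀ x : A, x * a ∈ ⨆ g, Nsub 𝒜 hloc g)
    (Nsub 𝒜 hloc) haN ?_ ?_ ?_ x
  · rintro g a ⟨hag, han⟩ x
    rw [show x * a = ∑ i ∈ DFinsupp.support (DirectSum.decompose 𝒜 x),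
        (DirectSum.decompose 𝒜 x i : A) * a by
      rw [← Finset.sum_mul, DirectSum.sum_support_decompose]]
    refine Submodule.sum_mem _ fun i _ => ?_
    refine Submodule.mem_iSup_of_mem (i + g) ?_
    exact ⟨SetLike.mul_mem_graded (SetLike.coe_mem _) hag,
      aux_mul_nilp 𝒜 hloc (SetLike.coe_mem _) hag han⟩
  · intro x; rw [mul_zero]; exact zero_mem _
  · intro a b hA hB x
    rw [mul_add]; exact add_mem (hA x) (hB x)

end Aux

/-- If a finite-dimensional `G`-graded algebra `A` is gr-local (every
homogeneous element is invertible or nilpotent), then the ideal `J` generated by the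
homogeneous nilpotent elements is a graded (homogeneous) ideal all of whose homogeneous
elements are nilpotent, and every homogeneous element not in `J` becomes invertible
modulo `J`, i.e. `A/J` is a gr-division algebra. -/
theorem stmt_0 {K G A : Type} [Field K] [AddGroup G] [DecidableEq G] [Fintype G]
    [Ring A] [Algebra K A] (𝒜 : G → Submodule K A) [GradedAlgebra 𝒜]
    [FiniteDimensional K A]
    (hloc : ∀ (g : G), ∀ a ∈ 𝒜 g, IsUnit a ∨ IsNilpotent a) :
    ∃ J : Ideal A,
      J = Ideal.span {a : A | (∃ g, a ∈ 𝒜 g) ∧ IsNilpotent a} ∧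
      Ideal.IsHomogeneous 𝒜 J ∧
      (∀ (g : G), ∀ a ∈ 𝒜 g, a ∈ J → IsNilpotent a) ∧
      (∀ (g : G), ∀ a ∈ 𝒜 g, a ∉ J →
        ∃ b : A, b * a - 1 ∈ J ∧ a * b - 1 ∈ J) := by
  classical
  set S : Set A := {a : A | (∃ g, a ∈ 𝒜 g) ∧ IsNilpotent a} with hS
  refine ⟨Ideal.span S, rfl, ?_, ?_, ?_⟩
  · exact Ideal.homogeneous_span 𝒜 S fun x hx => hx.1
  · -- every homogeneous element of J is nilpotent
    intro g a ha haJ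
    -- first: span S ⊆ N := ⨆ Nsub
    have hsub : ∀ b ∈ Ideal.span S, b ∈ ⨆ g, Nsub 𝒜 hloc g := by
      intro b hb
      refine Submodule.span_induction ?_ ?_ ?_ ?_ hb
      · rintro x ⟨⟨g, hxg⟩, hxn⟩
        exact Submodule.mem_iSup_of_mem g ⟨hxg, hxn⟩
      · exact zero_mem _
      · intro x y _ _ hx hy; exact add_mem hx hy
      · intro r x _ hx
        rw [smul_eq_mul]
        exact N_mul_mem 𝒜 hloc hx r
    have haN := hsub a haJ
    have hproj : GradedRing.proj 𝒜 g a ∈ Nsub 𝒜 hloc g := by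
      refine Submodule.iSup_induction (motive := fun b => GradedRing.proj 𝒜 g b ∈ Nsub 𝒜 hloc g)
        (Nsub 𝒜 hloc) haN ?_ ?_ ?_
      · rintro h b ⟨hbh, hbn⟩
        by_cases hhg : h = g
        · subst hhg
          rw [GradedRing.proj_apply, DirectSum.decompose_of_mem_same 𝒜 hbh]
          exact ⟨hbh, hbn⟩
        · rw [GradedRing.proj_apply, DirectSum.decompose_of_mem_ne 𝒜 hbh hhg]
          exact zero_mem _
      · simp only [map_zero]; exact zero_mem _
      · intro x y hx hy; simp only [map_add]; exact add_mem hx hy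
    rw [GradedRing.proj_apply, DirectSum.decompose_of_mem_same 𝒜 ha] at hproj
    exact hproj.2
  · intro g a ha haJ
    have hnn : ¬ IsNilpotent a := fun hn => haJ (Ideal.subset_span ⟨⟨g, ha⟩, hn⟩)
    rcases hloc g a ha with hu | hn
    · refine ⟨↑hu.unit⁻¹, ?_, ?_⟩
      · rw [IsUnit.val_inv_mul, sub_self]; exact zero_mem _
      · rw [IsUnit.mul_val_inv, sub_self]; exact zero_mem _
    · exact absurd hn hnn
end

section
/- Let A be a finite-dimensional G-graded algebra over a field K with G finite. If the identity component A_e is a local ring, then every homogeneous element of A is either invertible or nilpotent (i.e., A is gr-local). -/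
open DirectSum

section Aux

lemma aux_mul_eq_one_comm (K : Type) {A : Type} [Field K] [Ring A] [Algebra K A]
    [FiniteDimensional K A] {a b : A} (h : a * b = 1) : b * a = 1 := by
  have h1 : (LinearMap.mulLeft K a) * (LinearMap.mulLeft K b) = 1 := by
    ext v
    simp [Module.End.mul_apply, ← mul_assoc, h]
  have h2 : (LinearMap.mulLeft K b) * (LinearMap.mulLeft K a) = 1 :=
    mul_eq_one_symm h1
  have := LinearMap.congr_fun h2 1
  simpa [Module.End.mul_apply] using this

lemma aux_isUnit_of_mul_eq_one (K : Type) {A : Type} [Field K] [Ring A] [Algebra K A]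
    [FiniteDimensional K A] {a b : A} (h : a * b = 1) : IsUnit a :=
  ⟨⟨a, b, h, aux_mul_eq_one_comm K h⟩, rfl⟩

lemma aux_isUnit_of_mul_eq_one' (K : Type) {A : Type} [Field K] [Ring A] [Algebra K A]
    [FiniteDimensional K A] {a b : A} (h : a * b = 1) : IsUnit b :=
  ⟨⟨b, a, aux_mul_eq_one_comm K h, h⟩, rfl⟩

end Aux

/-- If the identity component `𝒜 0` of a finite-dimensional `G`-graded
algebra `A` (with `G` a finite group) is a local ring, then `A` is gr-local:
every homogeneous element of `A` is either invertible or nilpotent. -/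
theorem stmt_1 {K G A : Type} [Field K] [AddGroup G] [DecidableEq G] [Fintype G]
    [Ring A] [Algebra K A] (𝒜 : G → Submodule K A) [GradedAlgebra 𝒜]
    [FiniteDimensional K A]
    (hlocal : IsLocalRing ↥(𝒜 (0 : G))) :
    ∀ (g : G), ∀ a ∈ 𝒜 g, IsUnit a ∨ IsNilpotent a := by
  intro g a ha
  set N := Fintype.card G with hNdef
  have hNpos : 0 < N := Fintype.card_pos
  have hNg : N • g = 0 := card_nsmul_eq_zero
  set x : A := a ^ N with hxdef
  have hx : x ∈ 𝒜 0 := by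
    have := SetLike.pow_mem_graded N ha
    rwa [hNg] at this
  have hxpow : ∀ k : ℕ, x ^ k ∈ 𝒜 0 := by
    intro k
    have := SetLike.pow_mem_graded k hx
    rwa [smul_zero] at this
  set R := ↥(𝒜 (0 : G)) with hRdef
  have coe_mulR : ∀ u v : R, ((u * v : R) : A) = (u : A) * (v : A) := fun _ _ => rfl
  have coe_oneR : ((1 : R) : A) = 1 := rfl
  have coe_powR : ∀ (u : R) (k : ℕ), ((u ^ k : R) : A) = (u : A) ^ k := by
    intro u k
    induction k with
    | zero => simp [coe_oneR]
    | succ k ih => rw [pow_succ, coe_mulR, ih, pow_succ]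
  set x' : R := ⟨x, hx⟩ with hx'def
  by_cases hu : IsUnit x'
  · left
    obtain ⟨u, hu'⟩ := hu
    have h1 : x * ((u⁻¹ : Rˣ) : A) = 1 := by
      have : ((u * u⁻¹ : Rˣ) : R) = 1 := by simp
      calc x * ((u⁻¹ : Rˣ) : A) = (((u : R) : A)) * ((u⁻¹ : Rˣ) : A) := by rw [hu']
        _ = (((u : R) * ((u⁻¹ : Rˣ) : R) : R) : A) := (coe_mulR _ _).symm
        _ = 1 := by rw [← Units.val_mul, this, coe_oneR]
    have h2 : a * (a ^ (N - 1) * ((u⁻¹ : Rˣ) : A)) = 1 := by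
      rw [← mul_assoc, ← pow_succ', Nat.sub_add_cancel hNpos]
      exact h1
    exact aux_isUnit_of_mul_eq_one K h2
  · right
    -- stabilization of ranges of right multiplication by x
    obtain ⟨n, hn⟩ := IsArtinian.monotone_stabilizes (LinearMap.mulRight K x).iterateRange
    have hmem : x ^ n ∈ LinearMap.range ((LinearMap.mulRight K x) ^ (n + 1)) := by
      have heq : (LinearMap.mulRight K x).iterateRange n
          = (LinearMap.mulRight K x).iterateRange (n + 1) := hn (n + 1) (Nat.le_succ n)
      have heq' : LinearMap.range ((LinearMap.mulRight K x) ^ n)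
          = LinearMap.range ((LinearMap.mulRight K x) ^ (n + 1)) := heq
      rw [← heq']
      exact ⟨1, by simp [LinearMap.pow_mulRight]⟩
    obtain ⟨y, hy⟩ := hmem
    have hy' : y * x ^ (n + 1) = x ^ n := by
      rwa [LinearMap.pow_mulRight, LinearMap.mulRight_apply] at hy
    set y0 : R := decompose 𝒜 y 0 with hy0def
    have key : (y0 : A) * x ^ (n + 1) = x ^ n := by
      have h := DirectSum.coe_decompose_mul_add_of_right_mem 𝒜 (i := 0) (a := y)
        (hxpow (n + 1))
      rw [zero_add, hy', DirectSum.decompose_of_mem_same 𝒜 (hxpow n)] at h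
      exact h.symm
    have keyR : y0 * x' ^ (n + 1) = x' ^ n := by
      apply Subtype.ext
      rw [coe_mulR, coe_powR, coe_powR]
      exact key
    have h2 : (1 - y0 * x') * x' ^ n = 0 := by
      rw [sub_mul, one_mul, mul_assoc, ← pow_succ', keyR, sub_self]
    have hunit : IsUnit (1 - y0 * x') := by
      rcases IsLocalRing.isUnit_or_isUnit_of_add_one
        (a := y0 * x') (b := 1 - y0 * x') (by abel) with h | h
      · exfalso
        apply hu
        obtain ⟨u, hu'⟩ := h
        have hc : (((u⁻¹ : Rˣ) : R) * y0) * x' = 1 := by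
          rw [mul_assoc, ← hu', Units.inv_mul]
        exact aux_isUnit_of_mul_eq_one' K hc
      · exact h
    have h3 : x' ^ n = 0 := hunit.mul_left_cancel (by rw [mul_zero]; exact h2)
    have h4 : x ^ n = 0 := by
      have := congrArg (Subtype.val) h3
      rwa [coe_powR] at this
    exact ⟨N * n, by rw [pow_mul]; exact h4⟩
end

section
/- Let A be a finite-dimensional G-graded algebra and M, N two finitely generated gr-indecomposable graded A-modules such that M is not graded-isomorphic to any shift S_g(N), g ∈ G. Then for any A-linear maps φ: M → N and ψ: N → M that are sums of homogeneous-degree graded morphisms, the composite φψ lies in the graded Jacobson radical J_G(End_A(M)). -/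
variable (K G A : Type) [Field K] [AddGroup G] [DecidableEq G] [Fintype G]
  [Ring A] [Algebra K A] (𝒜 : G → Submodule K A)

/-- A `G`-graded module over the `G`-graded algebra `A`. -/
structure GModule where
  carrier : Type
  [acg : AddCommGroup carrier]
  [modA : Module A carrier]
  [modK : Module K carrier]
  [tower : IsScalarTower K A carrier]
  grading : G → Submodule K carrier
  internal : DirectSum.IsInternal grading
  smul_mem : ∀ ⦃g h : G⦄ ⦃a : A⦄ ⦃m : carrier⦄,
    a ∈ 𝒜 g → m ∈ grading h → a • m ∈ grading (g + h)

attribute [instance] GModule.acg GModule.modA GModule.modK GModule.tower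

variable {K G A 𝒜}

/-- A graded morphism (degree-preserving `A`-linear map) between graded modules. -/
def IsGrMap (M N : GModule K G A 𝒜) (f : M.carrier →ₗ[A] N.carrier) : Prop :=
  ∀ ⦃g : G⦄ ⦃m : M.carrier⦄, m ∈ M.grading g → f m ∈ N.grading g

/-- A submodule `N` of a graded module is homogeneous (graded) if it contains the
homogeneous components of each of its elements. -/
def IsHomogSub {M : Type} [AddCommGroup M] [Module A M] [Module K M]
    (ℳ : G → Submodule K M) (N : Submodule A M) : Prop :=
  ∀ (c : G →₀ M), (∀ g, c g ∈ ℳ g) → (c.sum fun _ x => x) ∈ N → ∀ g, c g ∈ N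

/-- A gr-maximal submodule: a proper homogeneous submodule maximal among proper
homogeneous submodules (equivalently, the quotient is gr-simple). -/
def IsGrMaximal {M : Type} [AddCommGroup M] [Module A M] [Module K M]
    (ℳ : G → Submodule K M) (N : Submodule A M) : Prop :=
  IsHomogSub ℳ N ∧ N ≠ ⊤ ∧
    ∀ P : Submodule A M, IsHomogSub ℳ P → N < P → P = ⊤

/-- The graded Jacobson radical: the intersection of all gr-maximal submodules. -/
def grRad {M : Type} [AddCommGroup M] [Module A M] [Module K M]
    (ℳ : G → Submodule K M) : Submodule A M :=
  sInf {N | IsGrMaximal ℳ N}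

/-- A graded module is gr-projective if graded morphisms out of it lift along graded
epimorphisms. -/
def IsGrProjective (P : GModule K G A 𝒜) : Prop :=
  ∀ (M N : GModule K G A 𝒜) (φ : M.carrier →ₗ[A] N.carrier),
    IsGrMap M N φ → Function.Surjective φ →
    ∀ ψ : P.carrier →ₗ[A] N.carrier, IsGrMap P N ψ →
      ∃ σ : P.carrier →ₗ[A] M.carrier, IsGrMap P M σ ∧ φ ∘ₗ σ = ψ

/-- gr-indecomposable: nonzero and not a direct sum of two nonzero graded submodules. -/
def GrIndec (M : GModule K G A 𝒜) : Prop :=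
  (∃ m : M.carrier, m ≠ 0) ∧
  ∀ N₁ N₂ : Submodule A M.carrier, IsHomogSub M.grading N₁ → IsHomogSub M.grading N₂ →
    N₁ ⊓ N₂ = ⊥ → N₁ ⊔ N₂ = ⊤ → N₁ = ⊥ ∨ N₂ = ⊥

/-- gr-simple: nonzero with no proper nonzero graded submodules. -/
def GrSimple (M : GModule K G A 𝒜) : Prop :=
  (∃ m : M.carrier, m ≠ 0) ∧
  ∀ N : Submodule A M.carrier, IsHomogSub M.grading N → N = ⊥ ∨ N = ⊤


/-- Graded morphisms of degree `g` between graded modules: `A`-linear maps sending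
`M_h` into `N_{h+g}`. -/
def HomDeg (M N : GModule K G A 𝒜) (g : G) : Set (M.carrier →ₗ[A] N.carrier) :=
  {f | ∀ ⦃h : G⦄ ⦃m : M.carrier⦄, m ∈ M.grading h → f m ∈ N.grading (h + g)}


/-! ### Auxiliary lemmas -/

section Aux

set_option synthInstance.maxHeartbeats 1000000
set_option linter.unusedSectionVars false
set_option maxHeartbeats 1000000

open DirectSum

/-- Uniqueness half of the internal direct sum: a finite family of homogeneous
elements summing to zero is identically zero. -/
lemma GModule.sum_eq_zero' (M : GModule K G A 𝒜) {x : G → M.carrier}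
    (hx : ∀ g, x g ∈ M.grading g) (h : ∑ g, x g = 0) (g : G) : x g = 0 := by
  have hD : (∑ g', DirectSum.of (fun i => M.grading i) g' ⟨x g', hx g'⟩)
      = (0 : ⨁ i, M.grading i) := by
    apply M.internal.injective
    rw [map_sum, map_zero]
    simpa using h
  have h1 := congrArg (fun D : ⨁ i, M.grading i => D g) hD
  simp only at h1
  rw [DFinsupp.finset_sum_apply] at h1
  have h2 : ∑ a : G, ((DirectSum.of (fun i => M.grading i) a) ⟨x a, hx a⟩) g
      = ((DirectSum.of (fun i => M.grading i) g) ⟨x g, hx g⟩) g :=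
    Finset.sum_eq_single_of_mem g (Finset.mem_univ g)
      (fun b _ hb => DirectSum.of_eq_of_ne _ _ _ hb.symm)
  rw [h2, DirectSum.of_eq_same] at h1
  simpa [Subtype.ext_iff] using h1

/-- Existence half: every element decomposes into homogeneous components. -/
lemma GModule.exists_decomp (M : GModule K G A 𝒜) (m : M.carrier) :
    ∃ x : G → M.carrier, (∀ g, x g ∈ M.grading g) ∧ ∑ g, x g = m := by
  obtain ⟨D, hD⟩ := M.internal.surjective m
  refine ⟨fun g => (D g : M.carrier), fun g => (D g).2, ?_⟩
  calc ∑ g, (D g : M.carrier)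
      = DirectSum.coeAddMonoidHom M.grading (∑ g, DirectSum.of _ g (D g)) := by
        rw [map_sum]; simp
    _ = m := by rw [DirectSum.sum_univ_of]; exact hD

/-- Components of a homogeneous element are unique. -/
lemma GModule.comp_eq (M : GModule K G A 𝒜) {x : G → M.carrier} {h : G} {m : M.carrier}
    (hx : ∀ g, x g ∈ M.grading g) (hm : m ∈ M.grading h) (hsum : ∑ g, x g = m) :
    ∀ g, g ≠ h → x g = 0 := by
  have key : ∀ g, x g - (if g = h then m else 0) = 0 := by
    apply M.sum_eq_zero' (x := fun g => x g - (if g = h then m else 0))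
    · intro g
      refine sub_mem (hx g) ?_
      split
      · next heq => exact heq ▸ hm
      · exact zero_mem _
    · rw [Finset.sum_sub_distrib, hsum, Finset.sum_ite_eq' Finset.univ h (fun _ => m),
        if_pos (Finset.mem_univ h), sub_self]
  intro g hg
  have := key g
  rw [if_neg hg, sub_zero] at this
  exact this

lemma homDeg_comp {M N P : GModule K G A 𝒜} {f : M.carrier →ₗ[A] N.carrier}
    {f' : N.carrier →ₗ[A] P.carrier} {a b : G} (hf : f ∈ HomDeg M N a)
    (hf' : f' ∈ HomDeg N P b) : f' ∘ₗ f ∈ HomDeg M P (a + b) := by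
  intro h m hm
  have := hf' (hf hm)
  rwa [add_assoc] at this

lemma homDeg_sum {ι : Type} (s : Finset ι) {M N : GModule K G A 𝒜} {g : G}
    (f : ι → (M.carrier →ₗ[A] N.carrier)) (hf : ∀ i ∈ s, f i ∈ HomDeg M N g) :
    (∑ i ∈ s, f i) ∈ HomDeg M N g := by
  intro h m hm
  rw [LinearMap.sum_apply]
  exact Submodule.sum_mem _ fun i hi => hf i hi hm

lemma homDeg_zero_iff {M N : GModule K G A 𝒜} {f : M.carrier →ₗ[A] N.carrier} :
    f ∈ HomDeg M N 0 ↔ ∀ ⦃h : G⦄ ⦃m : M.carrier⦄, m ∈ M.grading h → f m ∈ N.grading h := by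
  unfold HomDeg
  simp only [Set.mem_setOf_eq, add_zero]

/-- The inverse of an invertible endomorphism of degree `g` has degree `-g`. -/
lemma homDeg_inv {M : GModule K G A 𝒜} {u u' : Module.End A M.carrier} {g : G}
    (hu : u ∈ HomDeg M M g) (h1 : u' * u = 1) (h2 : u * u' = 1) :
    u' ∈ HomDeg M M (-g) := by
  intro h m hm
  have hinv1 : ∀ a, u' (u a) = a := fun a => by
    have := LinearMap.congr_fun h1 a
    simpa [Module.End.mul_apply] using this
  have hinv2 : ∀ a, u (u' a) = a := fun a => by
    have := LinearMap.congr_fun h2 a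
    simpa [Module.End.mul_apply] using this
  have hinj : Function.Injective u := fun a b hab => by
    rw [← hinv1 a, hab, hinv1 b]
  obtain ⟨x, hx, hsum⟩ := M.exists_decomp (u' m)
  -- reindexed family of homogeneous components of `m`
  set y : G → M.carrier := fun j => u (x (j + -g)) with hy
  have hy_mem : ∀ j, y j ∈ M.grading j := fun j => by
    have := hu (hx (j + -g))
    rwa [neg_add_cancel_right] at this
  have hy_sum : ∑ j, y j = m := by
    have hb : ∑ k, u (x k) = ∑ j, y j :=
      Fintype.sum_equiv (Equiv.addRight g) _ _
        (fun k => by simp [hy, Equiv.coe_addRight, add_neg_cancel_right])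
    rw [← hb, ← map_sum, hsum, hinv2]
  have hzero : ∀ j, j ≠ h → y j = 0 := M.comp_eq hy_mem hm hy_sum
  have hx_zero : ∀ k, k ≠ h + -g → x k = 0 := by
    intro k hk
    have hj : k + g ≠ h := fun hj => hk (by rw [← hj, add_neg_cancel_right])
    have := hzero (k + g) hj
    rw [hy] at this
    simp only [add_neg_cancel_right] at this
    exact hinj (by simpa using this)
  have : u' m = x (h + -g) := by
    rw [← hsum, Finset.sum_eq_single_of_mem (h + -g) (Finset.mem_univ _)
      (fun b _ hb => hx_zero b hb)]
  rw [this]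
  exact hx (h + -g)

lemma homDeg_zero_pow {M : GModule K G A 𝒜} {f : Module.End A M.carrier}
    (hf : f ∈ HomDeg M M 0) (n : ℕ) : f ^ n ∈ HomDeg M M 0 := by
  induction n with
  | zero =>
    rw [homDeg_zero_iff]
    intro h m hm
    simpa using hm
  | succ n ih =>
    rw [homDeg_zero_iff]
    intro h m hm
    rw [pow_succ, Module.End.mul_apply]
    exact homDeg_zero_iff.mp ih (homDeg_zero_iff.mp hf hm)

lemma isHomog_ker {M : GModule K G A 𝒜} {f : Module.End A M.carrier}
    (hf : f ∈ HomDeg M M 0) : IsHomogSub M.grading (LinearMap.ker f) := by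
  intro c hc hsum g
  rw [Finsupp.sum_fintype _ _ (fun _ => rfl)] at hsum
  rw [LinearMap.mem_ker] at hsum ⊢
  exact M.sum_eq_zero' (x := fun g => f (c g))
    (fun g => homDeg_zero_iff.mp hf (hc g)) (by rw [← map_sum, hsum]) g

lemma isHomog_range {M : GModule K G A 𝒜} {f : Module.End A M.carrier}
    (hf : f ∈ HomDeg M M 0) : IsHomogSub M.grading (LinearMap.range f) := by
  intro c hc hsum g
  rw [Finsupp.sum_fintype _ _ (fun _ => rfl)] at hsum
  obtain ⟨y, hy⟩ := hsum
  obtain ⟨x, hx, hxsum⟩ := M.exists_decomp y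
  have hz : ∀ g', c g' - f (x g') = 0 :=
    M.sum_eq_zero' (x := fun g' => c g' - f (x g'))
      (fun g' => sub_mem (hc g') (homDeg_zero_iff.mp hf (hx g')))
      (by rw [Finset.sum_sub_distrib, ← hy, ← map_sum, hxsum, sub_self])
  exact ⟨x g, (eq_of_sub_eq_zero (hz g)).symm⟩

/-- A degree-zero idempotent endomorphism of a gr-indecomposable module is `0` or `1`. -/
lemma idem_eq_zero_or_one {N : GModule K G A 𝒜} (hN : GrIndec N)
    {e : Module.End A N.carrier} (he : e ∈ HomDeg N N 0) (hee : e * e = e) :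
    e = 0 ∨ e = 1 := by
  have heapp : ∀ x, e (e x) = e x := fun x => by
    have := LinearMap.congr_fun hee x
    simpa [Module.End.mul_apply] using this
  have hinf : LinearMap.ker e ⊓ LinearMap.range e = ⊥ := by
    rw [eq_bot_iff]
    rintro x ⟨hk, y, rfl⟩
    have : e (e y) = 0 := hk
    rw [heapp] at this
    simp [this]
  have hsup : LinearMap.ker e ⊔ LinearMap.range e = ⊤ := by
    rw [eq_top_iff]
    intro x _
    refine Submodule.mem_sup.mpr ⟨x - e x, ?_, e x, ⟨x, rfl⟩, by abel⟩
    rw [LinearMap.mem_ker, map_sub, heapp, sub_self]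
  rcases hN.2 _ _ (isHomog_ker he) (isHomog_range he) hinf hsup with h | h
  · right
    ext x
    have : x - e x ∈ LinearMap.ker e := by
      rw [LinearMap.mem_ker, map_sub, heapp, sub_self]
    rw [h, Submodule.mem_bot, sub_eq_zero] at this
    simpa [Module.End.one_apply] using this.symm
  · left
    ext x
    have : e x ∈ LinearMap.range e := ⟨x, rfl⟩
    rw [h, Submodule.mem_bot] at this
    simpa using this

/-- Fitting-type dichotomy: a degree-zero non-invertible endomorphism of a finitely
generated gr-indecomposable module over a finite-dimensional algebra is nilpotent. -/
lemma nilpotent_of_not_isUnit [FiniteDimensional K A] {M : GModule K G A 𝒜}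
    [Module.Finite A M.carrier] (hM : GrIndec M)
    {f : Module.End A M.carrier} (hf : f ∈ HomDeg M M 0) (hu : ¬ IsUnit f) :
    IsNilpotent f := by
  haveI : Module.Finite K M.carrier := Module.Finite.trans A M.carrier
  haveI : IsNoetherian A M.carrier := isNoetherian_of_tower K inferInstance
  haveI : IsArtinian A M.carrier := isArtinian_of_tower K inferInstance
  obtain ⟨n, hn⟩ := Filter.eventually_atTop.mp f.eventually_isCompl_ker_pow_range_pow
  have hc := hn (n + 1) (Nat.le_succ n)
  rcases hM.2 _ _ (isHomog_ker (homDeg_zero_pow hf (n + 1)))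
      (isHomog_range (homDeg_zero_pow hf (n + 1)))
      (disjoint_iff.mp hc.1) (codisjoint_iff.mp hc.2) with h | h
  · exfalso
    apply hu
    rw [Module.End.isUnit_iff]
    have hinj : Function.Injective f := by
      intro a b hab
      have hz : (f ^ (n + 1)) (a - b) = 0 := by
        rw [pow_succ, Module.End.mul_apply, map_sub, hab, sub_self, map_zero]
      have := h ▸ (LinearMap.mem_ker.mpr hz)
      rw [Submodule.mem_bot] at this
      exact sub_eq_zero.mp this
    refine ⟨hinj, ?_⟩
    have := (LinearMap.injective_iff_surjective
      (f := f.restrictScalars K)).mp hinj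
    exact this
  · exact ⟨n + 1, LinearMap.range_eq_bot.mp h⟩

/-- In the graded-local ring `End(M)` (`M` gr-indecomposable), if a finite sum of
degree-zero endomorphisms is invertible then one of them is. -/
lemma exists_isUnit_of_isUnit_sum [FiniteDimensional K A] {M : GModule K G A 𝒜}
    [Module.Finite A M.carrier] (hM : GrIndec M) {ι : Type} (s : Finset ι)
    (f : ι → Module.End A M.carrier) :
    (∀ i ∈ s, f i ∈ HomDeg M M 0) → IsUnit (∑ i ∈ s, f i) →
    ∃ i ∈ s, IsUnit (f i) := by
  classical
  induction s using Finset.induction_on with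
  | empty =>
    intro _ hu
    exfalso
    obtain ⟨m, hm⟩ := hM.1
    rw [Finset.sum_empty] at hu
    have h01 : (0 : Module.End A M.carrier) = 1 := isUnit_zero_iff.mp hu
    exact hm (by simpa using (LinearMap.congr_fun h01 m).symm)
  | @insert a s ha ih =>
    intro hdeg hu
    by_cases hfa : IsUnit (f a)
    · exact ⟨a, Finset.mem_insert_self a s, hfa⟩
    rw [Finset.sum_insert ha] at hu
    set S : Module.End A M.carrier := ∑ i ∈ s, f i with hS
    set v : Module.End A M.carrier := ↑hu.unit⁻¹ with hv
    have hv1 : v * (f a + S) = 1 := hu.val_inv_mul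
    have hv2 : (f a + S) * v = 1 := hu.mul_val_inv
    have htot : (f a + S) ∈ HomDeg M M 0 := by
      have := homDeg_sum (insert a s) f hdeg
      rwa [Finset.sum_insert ha] at this
    have hvdeg : v ∈ HomDeg M M 0 := by
      have := homDeg_inv htot hv1 hv2
      rwa [neg_zero] at this
    have htdeg : v * f a ∈ HomDeg M M 0 := by
      have := homDeg_comp (hdeg a (Finset.mem_insert_self a s)) hvdeg
      rwa [add_zero, ← Module.End.mul_eq_comp] at this
    have htnu : ¬ IsUnit (v * f a) := by
      intro hvfa
      apply hfa
      have : f a = (f a + S) * (v * f a) := by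
        rw [← mul_assoc, hv2, one_mul]
      rw [this]
      exact hu.mul hvfa
    have hnil : IsNilpotent (v * f a) := nilpotent_of_not_isUnit hM htdeg htnu
    have hvS : IsUnit (v * S) := by
      have : v * S = 1 - v * f a := by
        rw [mul_add] at hv1
        rw [eq_sub_iff_add_eq, add_comm]
        exact hv1
      rw [this]
      exact hnil.isUnit_one_sub
    have hSu : IsUnit S := by
      have : S = (f a + S) * (v * S) := by rw [← mul_assoc, hv2, one_mul]
      rw [this]
      exact hu.mul hvS
    obtain ⟨i, hi, hui⟩ := ih (fun i hi => hdeg i (Finset.mem_insert_of_mem hi)) hSu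
    exact ⟨i, Finset.mem_insert_of_mem hi, hui⟩

end Aux

/-- Let `M`, `N` be finitely generated gr-indecomposable graded modules
over a finite-dimensional `G`-graded algebra such that `M` is not graded-isomorphic to
any shift `S_g(N)`.  Then for any `φ : M → N` and `ψ : N → M` which are sums of
homogeneous graded morphisms, the composite `φψ` (first `φ`, then `ψ`) lies in the
graded Jacobson radical of `End_A(M)`, i.e. it is a sum of non-invertible homogeneous
endomorphisms. -/
theorem stmt_17 [GradedAlgebra 𝒜] [FiniteDimensional K A]
    (M N : GModule K G A 𝒜) [Module.Finite A M.carrier] [Module.Finite A N.carrier]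
    (hM : GrIndec M) (hN : GrIndec N)
    (hnshift : ¬ ∃ (g : G) (e : M.carrier ≃ₗ[A] N.carrier),
      ∀ ⦃h : G⦄ ⦃m : M.carrier⦄, m ∈ M.grading h → e m ∈ N.grading (h + g))
    (φ : M.carrier →ₗ[A] N.carrier) (ψ : N.carrier →ₗ[A] M.carrier)
    (hφ : ∃ c : G → (M.carrier →ₗ[A] N.carrier),
      (∀ g, c g ∈ HomDeg M N g) ∧ φ = ∑ g, c g)
    (hψ : ∃ c : G → (N.carrier →ₗ[A] M.carrier),
      (∀ g, c g ∈ HomDeg N M g) ∧ ψ = ∑ g, c g) :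
    ∃ c : G → (Module.End A M.carrier),
      (∀ g, c g ∈ HomDeg M M g ∧ ¬ IsUnit (c g)) ∧ ψ ∘ₗ φ = ∑ g, c g := by
  classical
  obtain ⟨cφ, hcφ, hφs⟩ := hφ
  obtain ⟨cψ, hcψ, hψs⟩ := hψ
  have hterm : ∀ g g1 : G, (cψ (-g1 + g)) ∘ₗ (cφ g1) ∈ HomDeg M M g := by
    intro g g1
    have := homDeg_comp (hcφ g1) (hcψ (-g1 + g))
    rwa [add_neg_cancel_left] at this
  refine ⟨fun g => ∑ g1, (cψ (-g1 + g)) ∘ₗ (cφ g1), fun g => ⟨?_, ?_⟩, ?_⟩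
  · exact homDeg_sum Finset.univ _ (fun g1 _ => hterm g g1)
  · -- non-invertibility of each homogeneous component
    intro hunit
    set u : Module.End A M.carrier := ∑ g1, (cψ (-g1 + g)) ∘ₗ (cφ g1) with hu
    have hudeg : u ∈ HomDeg M M g := homDeg_sum Finset.univ _ (fun g1 _ => hterm g g1)
    set u' : Module.End A M.carrier := ↑hunit.unit⁻¹ with hu'
    have h1 : u' * u = 1 := hunit.val_inv_mul
    have h2 : u * u' = 1 := hunit.mul_val_inv
    have hu'deg : u' ∈ HomDeg M M (-g) := homDeg_inv hudeg h1 h2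
    have hdeg0 : ∀ g1 ∈ Finset.univ, u' * ((cψ (-g1 + g)) ∘ₗ (cφ g1)) ∈ HomDeg M M 0 := by
      intro g1 _
      have := homDeg_comp (hterm g g1) hu'deg
      rwa [add_neg_cancel, ← Module.End.mul_eq_comp] at this
    have hsum1 : (∑ g1, u' * ((cψ (-g1 + g)) ∘ₗ (cφ g1))) = 1 := by
      rw [← Finset.mul_sum, ← hu, h1]
    obtain ⟨g1, -, ht⟩ := exists_isUnit_of_isUnit_sum hM Finset.univ _ hdeg0
      (hsum1 ▸ isUnit_one)
    set t : Module.End A M.carrier := u' * ((cψ (-g1 + g)) ∘ₗ (cφ g1)) with htdef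
    set t' : Module.End A M.carrier := ↑ht.unit⁻¹ with ht'
    have ht1 : t' * t = 1 := ht.val_inv_mul
    have ht2 : t * t' = 1 := ht.mul_val_inv
    have htdeg : t ∈ HomDeg M M 0 := hdeg0 g1 (Finset.mem_univ g1)
    have ht'deg : t' ∈ HomDeg M M 0 := by
      have := homDeg_inv htdeg ht1 ht2
      rwa [neg_zero] at this
    set v : N.carrier →ₗ[A] M.carrier := t' ∘ₗ (u' ∘ₗ cψ (-g1 + g)) with hvdef
    have hv : ∀ m : M.carrier, v (cφ g1 m) = m := by
      intro m
      have := LinearMap.congr_fun ht1 m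
      simpa [hvdef, htdef, Module.End.mul_apply] using this
    have hvdeg : v ∈ HomDeg N M (-g1) := by
      have hA := homDeg_comp (hcψ (-g1 + g)) hu'deg
      have hB := homDeg_comp hA ht'deg
      rw [add_zero] at hB
      have hgrp : (-g1 + g) + -g = -g1 := by
        rw [add_assoc, add_neg_cancel, add_zero]
      rw [hgrp] at hB
      exact hB
    set e : Module.End A N.carrier := (cφ g1) ∘ₗ v with hedef
    have hedeg : e ∈ HomDeg N N 0 := by
      have := homDeg_comp hvdeg (hcφ g1)
      rwa [neg_add_cancel] at this
    have hee : e * e = e := by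
      apply LinearMap.ext
      intro x
      simp [hedef, Module.End.mul_apply, hv]
    have hneq : e ≠ 0 := by
      intro h0
      obtain ⟨m, hm⟩ := hM.1
      apply hm
      have : v (e (cφ g1 m)) = m := by
        rw [hedef]
        simp only [LinearMap.comp_apply]
        rw [hv, hv]
      rw [h0] at this
      simpa using this.symm
    rcases idem_eq_zero_or_one hN hedeg hee with h0 | h1
    · exact hneq h0
    · apply hnshift
      refine ⟨g1, LinearEquiv.ofLinear (cφ g1) v ?_ (LinearMap.ext hv), ?_⟩
      · rw [← Module.End.one_eq_id, ← h1, hedef]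
      · intro h m hm
        rw [LinearEquiv.ofLinear_apply]
        exact hcφ g1 hm
  · -- the components sum to `ψ ∘ₗ φ`
    rw [hψs, hφs]
    apply LinearMap.ext
    intro m
    simp only [LinearMap.comp_apply, LinearMap.sum_apply, map_sum]
    conv_rhs => rw [Finset.sum_comm]
    refine Finset.sum_congr rfl fun g1 _ => ?_
    refine Fintype.sum_equiv (Equiv.addLeft g1) (fun x => (cψ x) ((cφ g1) m))
      (fun x => (cψ (-g1 + x)) ((cφ g1) m)) (fun x => by simp)
end
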